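/- Let P(R) be the space of Borel probability measures on R with the topology of weak convergence. The set D_+ = union over gamma > 0 of D(G_gamma), consisting of all distributions in the maximum domain of attraction of some Frechet-type extreme value distribution G_gamma with gamma > 0, is a set of the first Baire category (i.e., meagre) in P(R). -/

import Mathlib

open MeasureTheory Filter Topology Set NNReal

noncomputable def distrib (μ : ProbabilityMeasure ℝ) (x : ℝ) : ℝ :=
  (μ (Set.Iic x) : ℝ≥0)

noncomputable def evCdf (γ : ℝ) (x : ℝ) : ℝ :=
  if γ = 0 then Real.exp (-Real.exp (-x))
  else if 0 < 1 + γ * x then Real.exp (-(1 + γ * x) ^ (-1 / γ))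
  else if 0 < γ then 0 else 1

def MemDomAttr (γ : ℝ) (μ : ProbabilityMeasure ℝ) : Prop :=
  ∃ a b : ℕ → ℝ, (∀ n, 0 < a n) ∧
    ∀ x : ℝ, ContinuousAt (evCdf γ) x →
      Tendsto (fun n : ℕ => distrib μ (a n * x + b n) ^ n) atTop (𝓝 (evCdf γ x))

namespace FrechetMeagre

noncomputable def distribIio (μ : ProbabilityMeasure ℝ) (x : ℝ) : ℝ :=
  (μ (Set.Iio x) : ℝ≥0)

noncomputable def lvl (r : ℝ) (n : ℕ) : ℝ := Real.exp (-(r / n))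

/-- The covering closed sets. -/
def Cov (K N : ℕ) : Set (ProbabilityMeasure ℝ) :=
  {μ | ∀ n, N ≤ n → ∀ u v : ℝ,
    distrib μ u < lvl (3/2) n → distrib μ v < lvl (25/8) n →
    distribIio μ ((u + K * v) / (1 + K)) ≤ lvl (15/8) n}

lemma distrib_nonneg (μ : ProbabilityMeasure ℝ) (x : ℝ) : 0 ≤ distrib μ x :=
  NNReal.coe_nonneg _

lemma distrib_mono (μ : ProbabilityMeasure ℝ) {u v : ℝ} (h : u ≤ v) :
    distrib μ u ≤ distrib μ v := by
  exact_mod_cast μ.apply_mono (Set.Iic_subset_Iic.2 h)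

lemma distribIio_le_distrib (μ : ProbabilityMeasure ℝ) {w x : ℝ} (h : w ≤ x) :
    distribIio μ w ≤ distrib μ x := by
  exact_mod_cast μ.apply_mono (fun t ht => le_trans (le_of_lt ht) h)

lemma lvl_pos (r : ℝ) (n : ℕ) : 0 < lvl r n := Real.exp_pos _

lemma lvl_pow {r : ℝ} {n : ℕ} (hn : n ≠ 0) : lvl r n ^ n = Real.exp (-r) := by
  rw [lvl, ← Real.exp_nat_mul]
  congr 1
  field_simp

lemma distrib_eq_toReal (μ : ProbabilityMeasure ℝ) (x : ℝ) :
    distrib μ x = ((μ : Measure ℝ) (Set.Iic x)).toReal := rfl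

lemma distribIio_eq_toReal (μ : ProbabilityMeasure ℝ) (x : ℝ) :
    distribIio μ x = ((μ : Measure ℝ) (Set.Iio x)).toReal := rfl


lemma isClosed_le_distrib (c u : ℝ) :
    IsClosed {μ : ProbabilityMeasure ℝ | c ≤ distrib μ u} := by
  refine isClosed_of_closure_subset fun μ hμ => ?_
  obtain ⟨U, hSU, hU⟩ := mem_closure_iff_ultrafilter.mp hμ
  have hT : Tendsto (id : ProbabilityMeasure ℝ → ProbabilityMeasure ℝ) (U : Filter _) (𝓝 μ) := hU
  have key := ProbabilityMeasure.limsup_measure_closed_le_of_tendsto (μs := id) hT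
      (isClosed_Iic (a := u))
  have hfreq : ∃ᶠ ν : ProbabilityMeasure ℝ in (U : Filter (ProbabilityMeasure ℝ)),
      ENNReal.ofReal c ≤ (ν : Measure ℝ) (Set.Iic u) := by
    apply Filter.Eventually.frequently
    filter_upwards [hSU] with ν hν
    have : ENNReal.ofReal c ≤ ENNReal.ofReal (distrib ν u) := ENNReal.ofReal_le_ofReal hν
    rwa [distrib_eq_toReal, ENNReal.ofReal_toReal (measure_ne_top _ _)] at this
  have h1 : ENNReal.ofReal c ≤
      (U : Filter (ProbabilityMeasure ℝ)).limsup
        (fun ν : ProbabilityMeasure ℝ => (ν : Measure ℝ) (Set.Iic u)) :=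
    Filter.le_limsup_of_frequently_le' hfreq
  have h2 : ENNReal.ofReal c ≤ (μ : Measure ℝ) (Set.Iic u) := h1.trans key
  have := ENNReal.toReal_mono (measure_ne_top _ _) h2
  simp only [Set.mem_setOf_eq]
  rw [distrib_eq_toReal]
  rcases le_or_gt c 0 with hc | hc
  · exact hc.trans (ENNReal.toReal_nonneg)
  · rwa [ENNReal.toReal_ofReal hc.le] at this

lemma isClosed_distribIio_le (c w : ℝ) :
    IsClosed {μ : ProbabilityMeasure ℝ | distribIio μ w ≤ c} := by
  rcases lt_or_ge c 0 with hc | hc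
  · have : {μ : ProbabilityMeasure ℝ | distribIio μ w ≤ c} = ∅ := by
      ext ν
      simp only [Set.mem_setOf_eq, Set.mem_empty_iff_false, iff_false, not_le]
      exact lt_of_lt_of_le hc (NNReal.coe_nonneg _)
    rw [this]; exact isClosed_empty
  refine isClosed_of_closure_subset fun μ hμ => ?_
  obtain ⟨U, hSU, hU⟩ := mem_closure_iff_ultrafilter.mp hμ
  have hT : Tendsto (id : ProbabilityMeasure ℝ → ProbabilityMeasure ℝ) (U : Filter _) (𝓝 μ) := hU
  have key := ProbabilityMeasure.le_liminf_measure_open_of_tendsto (μs := id) hT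
      (isOpen_Iio (a := w))
  have hfreq : ∃ᶠ ν : ProbabilityMeasure ℝ in (U : Filter (ProbabilityMeasure ℝ)),
      (ν : Measure ℝ) (Set.Iio w) ≤ ENNReal.ofReal c := by
    apply Filter.Eventually.frequently
    filter_upwards [hSU] with ν hν
    have h0 : (0:ℝ) ≤ c := le_trans (by exact ENNReal.toReal_nonneg) hν
    have : ENNReal.ofReal (distribIio ν w) ≤ ENNReal.ofReal c := ENNReal.ofReal_le_ofReal hν
    rwa [distribIio_eq_toReal, ENNReal.ofReal_toReal (measure_ne_top _ _)] at this
  have h1 : (U : Filter (ProbabilityMeasure ℝ)).liminf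
      (fun ν : ProbabilityMeasure ℝ => (ν : Measure ℝ) (Set.Iio w)) ≤ ENNReal.ofReal c :=
    Filter.liminf_le_of_frequently_le' hfreq
  have h2 : (μ : Measure ℝ) (Set.Iio w) ≤ ENNReal.ofReal c := key.trans h1
  have := ENNReal.toReal_mono (ENNReal.ofReal_ne_top) h2
  simp only [Set.mem_setOf_eq]
  rw [distribIio_eq_toReal]
  rwa [ENNReal.toReal_ofReal hc] at this

lemma isClosed_Cov (K N : ℕ) : IsClosed (Cov K N) := by
  have hrw : Cov K N = ⋂ (n : ℕ), ⋂ (_ : N ≤ n), ⋂ (u : ℝ), ⋂ (v : ℝ),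
      ({μ : ProbabilityMeasure ℝ | lvl (3/2) n ≤ distrib μ u} ∪
       ({μ : ProbabilityMeasure ℝ | lvl (25/8) n ≤ distrib μ v} ∪
        {μ : ProbabilityMeasure ℝ |
          distribIio μ ((u + K * v) / (1 + K)) ≤ lvl (15/8) n})) := by
    ext μ
    simp only [Cov, Set.mem_setOf_eq, Set.mem_iInter, Set.mem_union]
    constructor
    · intro h n hn u v
      rcases lt_or_ge (distrib μ u) (lvl (3/2) n) with h1 | h1
      · rcases lt_or_ge (distrib μ v) (lvl (25/8) n) with h2 | h2
        · exact Or.inr (Or.inr (h n hn u v h1 h2))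
        · exact Or.inr (Or.inl h2)
      · exact Or.inl h1
    · intro h n hn u v h1 h2
      rcases h n hn u v with h3 | h3 | h3
      · exact absurd h1 (not_lt.2 h3)
      · exact absurd h2 (not_lt.2 h3)
      · exact h3
  rw [hrw]
  refine isClosed_iInter fun n => isClosed_iInter fun _ => isClosed_iInter fun u =>
    isClosed_iInter fun v => ?_
  exact (isClosed_le_distrib _ _).union ((isClosed_le_distrib _ _).union
    (isClosed_distribIio_le _ _))


lemma evCdf_spec {γ x : ℝ} (hγ : γ ≠ 0) (hx : 0 < 1 + γ * x) :
    ContinuousAt (evCdf γ) x ∧ evCdf γ x = Real.exp (-(1 + γ * x) ^ (-1 / γ)) := by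
  have hopen : ∀ᶠ y in 𝓝 x, evCdf γ y = Real.exp (-(1 + γ * y) ^ (-1 / γ)) := by
    have hc : Continuous fun y : ℝ => 1 + γ * y := by continuity
    filter_upwards [(hc.tendsto x).eventually (eventually_gt_nhds hx)] with y hy
    simp only [evCdf, hγ, if_false, hy, if_true, if_neg hγ, if_pos hy]
  have hca : ContinuousAt (fun y : ℝ => Real.exp (-(1 + γ * y) ^ (-1 / γ))) x := by
    have hc : Continuous fun y : ℝ => 1 + γ * y := by continuity
    have h1 : ContinuousAt (fun y : ℝ => (1 + γ * y) ^ (-1 / γ)) x :=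
      ContinuousAt.rpow_const hc.continuousAt (Or.inl (ne_of_gt hx))
    exact Real.continuous_exp.continuousAt.comp h1.neg
  constructor
  · exact hca.congr (Filter.EventuallyEq.symm hopen)
  · exact hopen.self_of_nhds

lemma evCdf_point {γ : ℝ} (hγ : 0 < γ) {t : ℝ} (ht : 0 < t) :
    ContinuousAt (evCdf γ) ((t ^ (-γ) - 1) / γ) ∧
      evCdf γ ((t ^ (-γ) - 1) / γ) = Real.exp (-t) := by
  have h1 : 1 + γ * ((t ^ (-γ) - 1) / γ) = t ^ (-γ) := by
    field_simp
    ring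
  have hpos : 0 < 1 + γ * ((t ^ (-γ) - 1) / γ) := by
    rw [h1]; exact Real.rpow_pos_of_pos ht _
  obtain ⟨hca, hval⟩ := evCdf_spec (ne_of_gt hγ) hpos
  refine ⟨hca, ?_⟩
  rw [hval, h1]
  have h2 : (t ^ (-γ)) ^ (-1 / γ) = t := by
    rw [← Real.rpow_mul ht.le, show (-γ) * (-1 / γ) = 1 by field_simp, Real.rpow_one]
  rw [h2]

lemma exists_mem_Cov {γ : ℝ} (hγ : 0 < γ) {μ : ProbabilityMeasure ℝ} (h : MemDomAttr γ μ) :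
    ∃ K N : ℕ, μ ∈ Cov K N := by
  obtain ⟨a, b, ha, hconv⟩ := h
  have h2pos : (0:ℝ) < (2:ℝ) ^ (-γ) := Real.rpow_pos_of_pos two_pos _
  have h3pos : (0:ℝ) < (3:ℝ) ^ (-γ) := Real.rpow_pos_of_pos (by norm_num) _
  have h2lt1 : (2:ℝ) ^ (-γ) < 1 :=
    Real.rpow_lt_one_of_one_lt_of_neg one_lt_two (neg_lt_zero.2 hγ)
  have h32 : (3:ℝ) ^ (-γ) < (2:ℝ) ^ (-γ) := by
    rw [Real.rpow_neg (by norm_num : (0:ℝ) ≤ 3), Real.rpow_neg (by norm_num : (0:ℝ) ≤ 2)]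
    exact inv_strictAnti₀ (Real.rpow_pos_of_pos two_pos _)
      (Real.rpow_lt_rpow (by norm_num) (by norm_num) hγ)
  set x1 : ℝ := ((3:ℝ) ^ (-γ) - 1) / γ with hx1def
  set x2 : ℝ := ((2:ℝ) ^ (-γ) - 1) / γ with hx2def
  set x3 : ℝ := ((1:ℝ) ^ (-γ) - 1) / γ with hx3def
  have hx3 : x3 = 0 := by simp [hx3def, Real.one_rpow]
  set K : ℕ := ⌈(1 - (2:ℝ) ^ (-γ)) / ((2:ℝ) ^ (-γ) - (3:ℝ) ^ (-γ))⌉₊ with hKdef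
  have hK : (1 - (2:ℝ) ^ (-γ)) / ((2:ℝ) ^ (-γ) - (3:ℝ) ^ (-γ)) ≤ (K:ℝ) := Nat.le_ceil _
  have hd : (0:ℝ) < (2:ℝ) ^ (-γ) - (3:ℝ) ^ (-γ) := sub_pos.2 h32
  have hKnum : 1 - (2:ℝ) ^ (-γ) ≤ (K:ℝ) * ((2:ℝ) ^ (-γ) - (3:ℝ) ^ (-γ)) :=
    (div_le_iff₀ hd).1 hK
  have hKx : (K:ℝ) * x1 ≤ (1 + (K:ℝ)) * x2 := by
    rw [hx1def, hx2def, ← mul_div_assoc, ← mul_div_assoc, div_le_div_iff₀ hγ hγ]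
    nlinarith [hKnum, hγ]
  -- the three convergence statements
  have L3 := hconv x3 (by rw [hx3def]; exact (evCdf_point hγ one_pos).1)
  rw [hx3def, (evCdf_point hγ one_pos).2] at L3
  have L2 := hconv x2 (by rw [hx2def]; exact (evCdf_point hγ two_pos).1)
  rw [hx2def, (evCdf_point hγ two_pos).2] at L2
  have L1 := hconv x1 (by rw [hx1def]; exact (evCdf_point hγ (by norm_num : (0:ℝ) < 3)).1)
  rw [hx1def, (evCdf_point hγ (by norm_num : (0:ℝ) < 3)).2] at L1
  rw [← hx3def] at L3
  rw [← hx2def] at L2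
  rw [← hx1def] at L1
  have E3 : ∀ᶠ n : ℕ in atTop, Real.exp (-(3/2)) < distrib μ (a n * x3 + b n) ^ n :=
    L3.eventually (eventually_gt_nhds (Real.exp_lt_exp.2 (by norm_num)))
  have E1 : ∀ᶠ n : ℕ in atTop, Real.exp (-(25/8)) < distrib μ (a n * x1 + b n) ^ n :=
    L1.eventually (eventually_gt_nhds (Real.exp_lt_exp.2 (by norm_num)))
  have E2 : ∀ᶠ n : ℕ in atTop, distrib μ (a n * x2 + b n) ^ n < Real.exp (-(15/8)) :=
    L2.eventually (eventually_lt_nhds (Real.exp_lt_exp.2 (by norm_num)))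
  obtain ⟨N, hN⟩ := Filter.eventually_atTop.1 (E1.and (E2.and (E3.and (eventually_ge_atTop 1))))
  refine ⟨K, N, ?_⟩
  intro n hn u v hu hv
  obtain ⟨e1, e2, e3, hn1⟩ := hN n hn
  have hn0 : n ≠ 0 := by omega
  have hu' : u < a n * x3 + b n := by
    by_contra hcon
    push_neg at hcon
    have h1 : distrib μ (a n * x3 + b n) < lvl (3/2) n :=
      lt_of_le_of_lt (distrib_mono μ hcon) hu
    have h2 : distrib μ (a n * x3 + b n) ^ n < lvl (3/2) n ^ n :=
      pow_lt_pow_left₀ h1 (distrib_nonneg μ _) hn0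
    rw [lvl_pow hn0] at h2
    linarith
  have hv' : v < a n * x1 + b n := by
    by_contra hcon
    push_neg at hcon
    have h1 : distrib μ (a n * x1 + b n) < lvl (25/8) n :=
      lt_of_le_of_lt (distrib_mono μ hcon) hv
    have h2 : distrib μ (a n * x1 + b n) ^ n < lvl (25/8) n ^ n :=
      pow_lt_pow_left₀ h1 (distrib_nonneg μ _) hn0
    rw [lvl_pow hn0] at h2
    linarith
  have hKpos : (0:ℝ) < 1 + (K:ℝ) := by positivity
  have hw : (u + (K:ℝ) * v) / (1 + (K:ℝ)) ≤ a n * x2 + b n := by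
    rw [div_le_iff₀ hKpos]
    have h1 : (K:ℝ) * v ≤ (K:ℝ) * (a n * x1 + b n) :=
      mul_le_mul_of_nonneg_left hv'.le (Nat.cast_nonneg K)
    have h2 : a n * ((K:ℝ) * x1) ≤ a n * ((1 + (K:ℝ)) * x2) :=
      mul_le_mul_of_nonneg_left hKx (ha n).le
    have hx30 : a n * x3 = 0 := by rw [hx3]; ring
    nlinarith [hu', h1, h2]
  have hF2 : distrib μ (a n * x2 + b n) < lvl (15/8) n := by
    by_contra hcon
    push_neg at hcon
    have h2 : lvl (15/8) n ^ n ≤ distrib μ (a n * x2 + b n) ^ n :=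
      pow_le_pow_left₀ (lvl_pos _ _).le hcon n
    rw [lvl_pow hn0] at h2
    linarith
  exact le_of_lt (lt_of_le_of_lt (distribIio_le_distrib μ hw) hF2)


section Mix

/-- The perturbed measure used to show the covering sets have empty interior. -/
noncomputable def mix (μ₀ : ProbabilityMeasure ℝ) (ε T T' : ℝ) : Measure ℝ :=
  ENNReal.ofReal (1 - ε) • (μ₀ : Measure ℝ) + ENNReal.ofReal (ε / 2) • Measure.dirac T
    + ENNReal.ofReal (ε / 2) • Measure.dirac T'

lemma mix_isProbability (μ₀ : ProbabilityMeasure ℝ) {ε : ℝ} (T T' : ℝ)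
    (hε0 : 0 ≤ ε) (hε1 : ε ≤ 1) : IsProbabilityMeasure (mix μ₀ ε T T') := by
  constructor
  simp only [mix, Measure.add_apply, Measure.smul_apply, smul_eq_mul, measure_univ, mul_one]
  rw [← ENNReal.ofReal_add (by linarith) (by linarith),
    ← ENNReal.ofReal_add (by linarith) (by linarith)]
  rw [show 1 - ε + ε / 2 + ε / 2 = 1 by ring, ENNReal.ofReal_one]

open scoped Classical in
lemma mix_apply (μ₀ : ProbabilityMeasure ℝ) {ε : ℝ} (T T' : ℝ) (hε0 : 0 ≤ ε) (hε1 : ε ≤ 1)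
    {s : Set ℝ} (hs : MeasurableSet s) :
    (mix μ₀ ε T T' s).toReal =
      (1 - ε) * ((μ₀ : Measure ℝ) s).toReal + (ε / 2) * (if T ∈ s then 1 else 0)
        + (ε / 2) * (if T' ∈ s then 1 else 0) := by
  have hd : Measure.dirac T s = (if T ∈ s then (1:ENNReal) else 0) := by
    rw [Measure.dirac_apply' _ hs]
    by_cases h : T ∈ s
    · simp [h]
    · simp [h]
  have hd' : Measure.dirac T' s = (if T' ∈ s then (1:ENNReal) else 0) := by
    rw [Measure.dirac_apply' _ hs]
    by_cases h : T' ∈ s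
    · simp [h]
    · simp [h]
  have h1 : ENNReal.ofReal (1 - ε) • (μ₀ : Measure ℝ) s ≠ ⊤ :=
    ENNReal.mul_ne_top ENNReal.ofReal_ne_top (measure_ne_top _ _)
  have h2 : ENNReal.ofReal (ε / 2) • Measure.dirac T s ≠ ⊤ := by
    rw [smul_eq_mul, hd]
    exact ENNReal.mul_ne_top ENNReal.ofReal_ne_top (by split <;> simp)
  have h3 : ENNReal.ofReal (ε / 2) • Measure.dirac T' s ≠ ⊤ := by
    rw [smul_eq_mul, hd']
    exact ENNReal.mul_ne_top ENNReal.ofReal_ne_top (by split <;> simp)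
  simp only [mix, Measure.add_apply, Measure.smul_apply]
  rw [ENNReal.toReal_add (by exact ENNReal.add_ne_top.2 ⟨h1, h2⟩) h3,
    ENNReal.toReal_add h1 h2]
  simp only [smul_eq_mul, hd, hd', ENNReal.toReal_mul,
    ENNReal.toReal_ofReal (by linarith : (0:ℝ) ≤ 1 - ε),
    ENNReal.toReal_ofReal (by linarith : (0:ℝ) ≤ ε / 2), apply_ite ENNReal.toReal,
    ENNReal.toReal_one, ENNReal.toReal_zero]

end Mix

lemma integral_mix (μ₀ : ProbabilityMeasure ℝ) {ε : ℝ} (T T' : ℝ) (hε0 : 0 ≤ ε) (hε1 : ε ≤ 1)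
    (f : BoundedContinuousFunction ℝ ℝ) :
    ∫ x, f x ∂(mix μ₀ ε T T') =
      (1 - ε) * ∫ x, f x ∂(μ₀ : Measure ℝ) + (ε / 2) * f T + (ε / 2) * f T' := by
  haveI i1 : IsFiniteMeasure (ENNReal.ofReal (1 - ε) • (μ₀ : Measure ℝ)) := by
    constructor
    rw [Measure.smul_apply, smul_eq_mul, measure_univ, mul_one]
    exact ENNReal.ofReal_lt_top
  haveI i2 : IsFiniteMeasure (ENNReal.ofReal (ε / 2) • Measure.dirac T) := by
    constructor
    rw [Measure.smul_apply, smul_eq_mul, measure_univ, mul_one]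
    exact ENNReal.ofReal_lt_top
  haveI i3 : IsFiniteMeasure (ENNReal.ofReal (ε / 2) • Measure.dirac T') := by
    constructor
    rw [Measure.smul_apply, smul_eq_mul, measure_univ, mul_one]
    exact ENNReal.ofReal_lt_top
  rw [mix, integral_add_measure (f.integrable _) (f.integrable _),
    integral_add_measure (f.integrable _) (f.integrable _),
    integral_smul_measure, integral_smul_measure, integral_smul_measure,
    integral_dirac, integral_dirac,
    ENNReal.toReal_ofReal (by linarith : (0:ℝ) ≤ 1 - ε),
    ENNReal.toReal_ofReal (by linarith : (0:ℝ) ≤ ε / 2)]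
  simp [smul_eq_mul]

lemma tendsto_mix (μ₀ : ProbabilityMeasure ℝ) (ε : ℕ → ℝ) (T T' : ℕ → ℝ)
    (hε0 : ∀ j, 0 ≤ ε j) (hε1 : ∀ j, ε j ≤ 1) (hεlim : Tendsto ε atTop (𝓝 0))
    (ν : ℕ → ProbabilityMeasure ℝ)
    (hν : ∀ j, (ν j : Measure ℝ) = mix μ₀ (ε j) (T j) (T' j)) :
    Tendsto ν atTop (𝓝 μ₀) := by
  rw [ProbabilityMeasure.tendsto_iff_forall_integral_tendsto]
  intro f
  set I := ∫ x, f x ∂(μ₀ : Measure ℝ) with hI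
  have hIle : |I| ≤ ‖f‖ := by
    rw [← Real.norm_eq_abs]
    calc ‖I‖ ≤ ∫ x, ‖f x‖ ∂(μ₀ : Measure ℝ) := norm_integral_le_integral_norm _
    _ ≤ ∫ _, ‖f‖ ∂(μ₀ : Measure ℝ) :=
        integral_mono (f.integrable _).norm (integrable_const _) fun x => f.norm_coe_le_norm x
    _ = ‖f‖ := by simp
  have hfb : ∀ x : ℝ, |f x| ≤ ‖f‖ := fun x => f.norm_coe_le_norm x
  rw [tendsto_iff_dist_tendsto_zero]
  apply squeeze_zero (fun j => dist_nonneg) (g := fun j => 2 * ‖f‖ * ε j)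
  · intro j
    rw [Real.dist_eq, hν j, integral_mix μ₀ (T j) (T' j) (hε0 j) (hε1 j) f]
    have key : (1 - ε j) * I + ε j / 2 * f (T j) + ε j / 2 * f (T' j) - I =
        ε j / 2 * (f (T j) - I) + ε j / 2 * (f (T' j) - I) := by ring
    rw [key]
    have h1 : |ε j / 2 * (f (T j) - I)| ≤ ε j / 2 * (2 * ‖f‖) := by
      rw [abs_mul, abs_of_nonneg (by linarith [hε0 j] : (0:ℝ) ≤ ε j / 2)]
      have : |f (T j) - I| ≤ 2 * ‖f‖ := by
        calc |f (T j) - I| ≤ |f (T j)| + |I| := abs_sub _ _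
        _ ≤ 2 * ‖f‖ := by linarith [hfb (T j)]
      exact mul_le_mul_of_nonneg_left this (by linarith [hε0 j])
    have h2 : |ε j / 2 * (f (T' j) - I)| ≤ ε j / 2 * (2 * ‖f‖) := by
      rw [abs_mul, abs_of_nonneg (by linarith [hε0 j] : (0:ℝ) ≤ ε j / 2)]
      have : |f (T' j) - I| ≤ 2 * ‖f‖ := by
        calc |f (T' j) - I| ≤ |f (T' j)| + |I| := abs_sub _ _
        _ ≤ 2 * ‖f‖ := by linarith [hfb (T' j)]
      exact mul_le_mul_of_nonneg_left this (by linarith [hε0 j])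
    calc |ε j / 2 * (f (T j) - I) + ε j / 2 * (f (T' j) - I)|
        ≤ |ε j / 2 * (f (T j) - I)| + |ε j / 2 * (f (T' j) - I)| := abs_add_le _ _
    _ ≤ 2 * ‖f‖ * ε j := by linarith
  · have := hεlim.const_mul (2 * ‖f‖)
    simpa using this

lemma exists_tail (μ₀ : ProbabilityMeasure ℝ) {δ : ℝ} (hδ : 0 < δ) :
    ∃ T : ℝ, 1 - δ ≤ distribIio μ₀ T := by
  rcases le_or_gt (1 - δ) 0 with h0 | h0
  · exact ⟨0, h0.trans (NNReal.coe_nonneg _)⟩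
  have hmono : Monotone (fun m : ℕ => Set.Iio (m : ℝ)) := by
    intro i j hij
    exact Set.Iio_subset_Iio (by exact_mod_cast hij)
  have hun : (⋃ m : ℕ, Set.Iio (m : ℝ)) = Set.univ := by
    ext x
    simp only [Set.mem_iUnion, Set.mem_Iio, Set.mem_univ, iff_true]
    exact exists_nat_gt x
  have h1 : Tendsto (fun m : ℕ => (μ₀ : Measure ℝ) (Set.Iio (m : ℝ))) atTop
      (𝓝 ((μ₀ : Measure ℝ) Set.univ)) := by
    have := tendsto_measure_iUnion_atTop (μ := (μ₀ : Measure ℝ)) hmono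
    rwa [hun] at this
  rw [measure_univ] at h1
  have hlt : ENNReal.ofReal (1 - δ) < 1 := by
    rw [← ENNReal.ofReal_one]
    exact (ENNReal.ofReal_lt_ofReal_iff (by norm_num)).mpr (by linarith)
  obtain ⟨m, hm⟩ := (h1.eventually (eventually_gt_nhds hlt)).exists
  refine ⟨(m : ℝ), ?_⟩
  have := ENNReal.toReal_mono (measure_ne_top _ _) hm.le
  rwa [ENNReal.toReal_ofReal (by linarith)] at this



lemma distrib_le_one (μ : ProbabilityMeasure ℝ) (x : ℝ) : distrib μ x ≤ 1 := by
  exact_mod_cast μ.apply_le_one _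

lemma one_sub_lt_lvl {r : ℝ} (hr : 0 < r) {n : ℕ} (hn : 0 < (n:ℝ)) : 1 - r / n < lvl r n := by
  have hne : -(r / (n:ℝ)) ≠ 0 := neg_ne_zero.2 (ne_of_gt (by positivity))
  have h := Real.add_one_lt_exp hne
  rw [lvl]
  linarith

set_option maxHeartbeats 1000000 in
lemma mix_not_mem (K N : ℕ) (μ₀ : ProbabilityMeasure ℝ) {n : ℕ} (hnN : N ≤ n) (hn77 : 77 ≤ n)
    {T : ℝ} (hT : 1 - (16 / (5 * (n : ℝ))) ^ 2 ≤ distribIio μ₀ T)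
    (ν : ProbabilityMeasure ℝ)
    (hν : (ν : Measure ℝ) = mix μ₀ (16 / (5 * (n : ℝ))) T (T + K + 2)) :
    ν ∉ Cov K N := by
  have hn77' : (77:ℝ) ≤ (n:ℝ) := by exact_mod_cast hn77
  have hn0 : (0:ℝ) < (n:ℝ) := by linarith
  set ε : ℝ := 16 / (5 * (n : ℝ)) with hεdef
  have hε0 : 0 < ε := by positivity
  have hε24 : ε ≤ 1 / 24 := by
    rw [hεdef, div_le_div_iff₀ (by positivity) (by norm_num)]
    linarith
  have hε1 : ε ≤ 1 := by linarith
  have hKnn : (0:ℝ) ≤ (K:ℝ) := Nat.cast_nonneg K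
  have hKpos : (0:ℝ) < 1 + (K:ℝ) := by positivity
  intro hmem
  -- first premise
  have hu : distrib ν (T + K + 1) < lvl (3/2) n := by
    have happ : distrib ν (T + K + 1) = (1 - ε) * distrib μ₀ (T + K + 1) + ε / 2 := by
      rw [distrib_eq_toReal, hν, mix_apply μ₀ T (T + K + 2) hε0.le hε1 measurableSet_Iic,
        if_pos (by simp only [Set.mem_Iic]; linarith),
        if_neg (by simp only [Set.mem_Iic]; intro hcon; linarith), ← distrib_eq_toReal]
      ring
    have hb : distrib ν (T + K + 1) ≤ 1 - ε / 2 := by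
      rw [happ]
      nlinarith [distrib_le_one μ₀ (T + K + 1), distrib_nonneg μ₀ (T + K + 1)]
    have hε2 : ε / 2 = 8 / (5 * (n:ℝ)) := by rw [hεdef]; ring
    have hmid : (3/2 : ℝ) / n ≤ ε / 2 := by
      rw [hε2, div_le_div_iff₀ hn0 (by positivity)]
      linarith
    calc distrib ν (T + K + 1) ≤ 1 - ε / 2 := hb
    _ ≤ 1 - (3/2 : ℝ) / n := by linarith
    _ < lvl (3/2) n := one_sub_lt_lvl (by norm_num) hn0
  -- second premise
  have hv : distrib ν (T - 1) < lvl (25/8) n := by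
    have happ : distrib ν (T - 1) = (1 - ε) * distrib μ₀ (T - 1) := by
      rw [distrib_eq_toReal, hν, mix_apply μ₀ T (T + K + 2) hε0.le hε1 measurableSet_Iic,
        if_neg (by simp only [Set.mem_Iic]; intro hcon; linarith),
        if_neg (by simp only [Set.mem_Iic]; intro hcon; linarith), ← distrib_eq_toReal]
      ring
    have hb : distrib ν (T - 1) ≤ 1 - ε := by
      rw [happ]
      nlinarith [distrib_le_one μ₀ (T - 1), distrib_nonneg μ₀ (T - 1)]
    have hmid : (25/8 : ℝ) / n ≤ ε := by
      rw [hεdef, div_le_div_iff₀ hn0 (by positivity)]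
      linarith
    calc distrib ν (T - 1) ≤ 1 - ε := hb
    _ ≤ 1 - (25/8 : ℝ) / n := by linarith
    _ < lvl (25/8) n := one_sub_lt_lvl (by norm_num) hn0
  have hconc := hmem n hnN (T + K + 1) (T - 1) hu hv
  -- now derive the contradiction
  have hw_eq : ((T + K + 1) + (K:ℝ) * (T - 1)) / (1 + (K:ℝ)) = T + 1 / (1 + (K:ℝ)) := by
    field_simp
    ring
  rw [hw_eq] at hconc
  have hwpos : (0:ℝ) < 1 / (1 + (K:ℝ)) := by positivity
  have hwle : 1 / (1 + (K:ℝ)) ≤ 1 := by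
    rw [div_le_one hKpos]
    linarith
  have hwval : distribIio ν (T + 1 / (1 + (K:ℝ))) =
      (1 - ε) * distribIio μ₀ (T + 1 / (1 + (K:ℝ))) + ε / 2 := by
    rw [distribIio_eq_toReal, hν, mix_apply μ₀ T (T + K + 2) hε0.le hε1 measurableSet_Iio,
      if_pos (by simp only [Set.mem_Iio]; linarith),
      if_neg (by simp only [Set.mem_Iio]; intro hcon; linarith), ← distribIio_eq_toReal]
    ring
  have hTle : T ≤ T + 1 / (1 + (K:ℝ)) := by linarith
  have hmono : distribIio μ₀ T ≤ distribIio μ₀ (T + 1 / (1 + (K:ℝ))) := by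
    exact_mod_cast μ₀.apply_mono (Set.Iio_subset_Iio hTle)
  have hlow : (1 - ε) * (1 - ε ^ 2) + ε / 2 ≤ distribIio ν (T + 1 / (1 + (K:ℝ))) := by
    rw [hwval]
    have h1 : 1 - ε ^ 2 ≤ distribIio μ₀ (T + 1 / (1 + (K:ℝ))) := le_trans hT hmono
    nlinarith
  have hy : (15/8 : ℝ) / n = 75 / 128 * ε := by
    rw [hεdef]
    field_simp
    ring
  have hexp : lvl (15/8) n < (1 - ε) * (1 - ε ^ 2) + ε / 2 := by
    rw [lvl, hy]
    have hyy : (0:ℝ) < 1 + 75 / 128 * ε := by positivity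
    have h2 : Real.exp (-(75 / 128 * ε)) ≤ 1 / (1 + 75 / 128 * ε) := by
      rw [Real.exp_neg, one_div]
      exact inv_anti₀ hyy (by linarith [Real.add_one_le_exp (75 / 128 * ε)])
    have h3 : 1 / (1 + 75 / 128 * ε) < (1 - ε) * (1 - ε ^ 2) + ε / 2 := by
      rw [div_lt_iff₀ hyy]
      nlinarith [hε0, hε24, mul_pos hε0 hε0, mul_pos (mul_pos hε0 hε0) hε0,
        mul_nonneg (mul_nonneg (mul_nonneg hε0.le hε0.le) hε0.le) hε0.le,
        mul_le_mul_of_nonneg_left hε24 hε0.le]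
    linarith
  exact absurd hconc (not_le.mpr (lt_of_lt_of_le hexp hlow))


lemma dense_compl_Cov (K N : ℕ) : Dense (Cov K N)ᶜ := by
  intro μ₀
  set m : ℕ → ℕ := fun j => max N 77 + j with hmdef
  have hm77 : ∀ j, 77 ≤ m j := fun j => le_trans (le_max_right N 77) (Nat.le_add_right _ _)
  have hmN : ∀ j, N ≤ m j := fun j => le_trans (le_max_left N 77) (Nat.le_add_right _ _)
  have hm0 : ∀ j, (0:ℝ) < (m j : ℝ) := fun j => by
    have : (77:ℝ) ≤ (m j : ℝ) := by exact_mod_cast hm77 j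
    linarith
  set ε : ℕ → ℝ := fun j => 16 / (5 * (m j : ℝ)) with hεdef
  have hε0 : ∀ j, 0 < ε j := fun j => by
    have := hm0 j
    positivity
  have hε1 : ∀ j, ε j ≤ 1 := fun j => by
    have h77 : (77:ℝ) ≤ (m j : ℝ) := by exact_mod_cast hm77 j
    rw [hεdef]
    simp only
    rw [div_le_one (by linarith)]
    linarith
  choose T hT using fun j => exists_tail μ₀ (δ := (ε j)^2) (pow_pos (hε0 j) 2)
  have hprob : ∀ j, IsProbabilityMeasure (mix μ₀ (ε j) (T j) (T j + K + 2)) :=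
    fun j => mix_isProbability μ₀ _ _ (hε0 j).le (hε1 j)
  set ν : ℕ → ProbabilityMeasure ℝ := fun j => ⟨mix μ₀ (ε j) (T j) (T j + K + 2), hprob j⟩
    with hνdef
  have hνcoe : ∀ j, (ν j : Measure ℝ) = mix μ₀ (ε j) (T j) (T j + K + 2) := fun j => rfl
  have hεlim : Tendsto ε atTop (𝓝 0) := by
    have hmlim : Tendsto (fun j : ℕ => (m j : ℝ)) atTop atTop := by
      apply tendsto_natCast_atTop_atTop.comp
      exact tendsto_atTop_mono (fun j => Nat.le_add_left j (max N 77)) tendsto_id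
    have h5 : Tendsto (fun j : ℕ => 5 * (m j : ℝ)) atTop atTop :=
      hmlim.const_mul_atTop (by norm_num)
    exact tendsto_const_nhds.div_atTop h5
  have hlim : Tendsto ν atTop (𝓝 μ₀) :=
    tendsto_mix μ₀ ε T (fun j => T j + K + 2) (fun j => (hε0 j).le) hε1 hεlim ν hνcoe
  have hmem : ∀ j, ν j ∈ (Cov K N)ᶜ := fun j =>
    mix_not_mem K N μ₀ (hmN j) (hm77 j) (hT j) (ν j) (hνcoe j)
  exact mem_closure_of_tendsto hlim (Filter.Eventually.of_forall hmem)

lemma isMeagre_Cov (K N : ℕ) : IsMeagre (Cov K N) := by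
  rw [IsMeagre]
  exact residual_of_dense_open (isClosed_Cov K N).isOpen_compl (dense_compl_Cov K N)

end FrechetMeagre

theorem meagre_frechet_domain_of_attraction :
    IsMeagre {μ : ProbabilityMeasure ℝ | ∃ γ : ℝ, 0 < γ ∧ MemDomAttr γ μ} := by
  have hsub : {μ : ProbabilityMeasure ℝ | ∃ γ : ℝ, 0 < γ ∧ MemDomAttr γ μ} ⊆
      ⋃ p : ℕ, FrechetMeagre.Cov p.unpair.1 p.unpair.2 := by
    intro μ hμ
    obtain ⟨γ, hγ, h⟩ := hμ
    obtain ⟨K, Nn, hm⟩ := FrechetMeagre.exists_mem_Cov hγ h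
    exact Set.mem_iUnion.2 ⟨Nat.pair K Nn, by simpa [Nat.unpair_pair] using hm⟩
  exact (isMeagre_iUnion fun p => FrechetMeagre.isMeagre_Cov _ _).mono hsub
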